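/- Let Z ≥ 1 be a natural number and let r, ε, u0 be real numbers with 0 ≤ r < 1, ε ≥ 0, u0 ≥ 0. Set θ = r·ε·u0^Z/(1−r)^(Z+1) and assume θ ≤ Z^Z/(Z+1)^(Z+1). Define U = (u0/(1−r))·Σ_{i=0}^{∞} C(i,Z)·θ^i (the sum taken as a tsum), where C(i,Z) = binomial((Z+1)·i, i)/(Z·i + 1). Then U satisfies the fixed-point equation U = u0 + r·(1 + ε·U^Z)·U. -/

import Mathlib

open Finset

/-- alternating binomial sum annihilates monomials of low degree -/
lemma alt0 : ∀ n : ℕ, ∀ k : ℕ, k < n →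
    ∑ i ∈ range (n + 1), (-1 : ℝ) ^ i * (n.choose i : ℝ) * (i : ℝ) ^ k = 0 := by
  intro n
  induction n using Nat.strong_induction_on with
  | _ n ih =>
    intro k hk
    match k with
    | 0 =>
      have h := Int.alternating_sum_range_choose (n := n)
      rw [if_neg (by omega)] at h
      have : ((∑ i ∈ range (n + 1), (-1 : ℤ) ^ i * (n.choose i : ℤ) : ℤ) : ℝ) = 0 := by
        rw [h]; norm_num
      push_cast at this
      simpa using this
    | (m + 1) =>
      have hn2 : 2 ≤ n := by omega
      obtain ⟨n', rfl⟩ : ∃ n', n = n' + 1 := ⟨n - 1, by omega⟩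
      rw [Finset.sum_range_succ']
      simp only [Nat.cast_zero, ne_eq, zero_pow (by omega : m + 1 ≠ 0), mul_zero, add_zero]
      have key : ∀ i : ℕ, (-1 : ℝ) ^ (i + 1) * ((n' + 1).choose (i + 1) : ℝ) * (((i:ℕ) + 1 : ℕ) : ℝ) ^ (m + 1)
          = -((n' : ℝ) + 1) * ((-1 : ℝ) ^ i * (n'.choose i : ℝ) * ((i : ℝ) + 1) ^ m) := by
        intro i
        have h0 : ((n' + 1) * n'.choose i : ℕ) = ((n' + 1).choose (i + 1) * (i + 1) : ℕ) := by
          simpa [Nat.succ_eq_add_one] using (Nat.add_one_mul_choose_eq n' i)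
        have h1 : ((n' : ℝ) + 1) * (n'.choose i : ℝ) = ((n' + 1).choose (i + 1) : ℝ) * ((i : ℝ) + 1) := by
          exact_mod_cast congrArg (fun x : ℕ => (x : ℝ)) h0
        push_cast
        have h2 : ((i : ℝ) + 1) ^ (m + 1) = ((i : ℝ) + 1) ^ m * ((i : ℝ) + 1) := by ring
        rw [h2, pow_succ]
        linear_combination ((-1 : ℝ) ^ i * ((i : ℝ) + 1) ^ m) * h1
      rw [Finset.sum_congr rfl (fun i _ => key i), ← Finset.mul_sum]
      have expand : ∀ i : ℕ, (-1 : ℝ) ^ i * (n'.choose i : ℝ) * ((i : ℝ) + 1) ^ m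
          = ∑ j ∈ range (m + 1), (m.choose j : ℝ) * ((-1 : ℝ) ^ i * (n'.choose i : ℝ) * (i : ℝ) ^ j) := by
        intro i
        rw [add_pow, Finset.mul_sum]
        apply Finset.sum_congr rfl
        intro j hj
        ring
      rw [Finset.sum_congr rfl (fun i _ => expand i), Finset.sum_comm]
      have inner : ∀ j ∈ range (m + 1),
          (∑ i ∈ range (n' + 1), (m.choose j : ℝ) * ((-1 : ℝ) ^ i * (n'.choose i : ℝ) * (i : ℝ) ^ j)) = 0 := by
        intro j hj
        rw [← Finset.mul_sum]
        rcases Nat.eq_zero_or_pos n' with h | h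
        · omega
        · rw [ih n' (by omega) j (by simp at hj; omega)]
          ring
      rw [Finset.sum_congr rfl inner]
      simp

lemma altpoly (n : ℕ) (hn : 1 ≤ n) (P : Polynomial ℝ) (hP : P.natDegree < n) :
    ∑ i ∈ range (n + 1), (-1 : ℝ) ^ i * (n.choose i : ℝ) * P.eval (i : ℝ) = 0 := by
  have expand : ∀ i : ℕ, (-1 : ℝ) ^ i * (n.choose i : ℝ) * P.eval (i : ℝ)
      = ∑ k ∈ range (P.natDegree + 1), P.coeff k * ((-1 : ℝ) ^ i * (n.choose i : ℝ) * (i : ℝ) ^ k) := by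
    intro i
    rw [Polynomial.eval_eq_sum_range, Finset.mul_sum]
    apply Finset.sum_congr rfl
    intro k _
    ring
  rw [Finset.sum_congr rfl (fun i _ => expand i), Finset.sum_comm]
  have inner : ∀ k ∈ range (P.natDegree + 1),
      (∑ i ∈ range (n + 1), P.coeff k * ((-1 : ℝ) ^ i * (n.choose i : ℝ) * (i : ℝ) ^ k)) = 0 := by
    intro k hk
    rw [← Finset.mul_sum, alt0 n k (by simp at hk; omega), mul_zero]
  rw [Finset.sum_congr rfl inner]
  simp

lemma descprod (a m : ℕ) : ∏ j ∈ range m, ((a : ℝ) - (j : ℝ)) = (a.descFactorial m : ℝ) := by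
  induction m with
  | zero => simp
  | succ m ih =>
    rw [Finset.prod_range_succ, ih, Nat.descFactorial_succ]
    rcases le_or_gt m a with h | h
    · push_cast [Nat.cast_sub h]; ring
    · have h1 : a.descFactorial m = 0 := Nat.descFactorial_eq_zero_iff_lt.mpr (by omega)
      simp [h1]

noncomputable def fc (Z i : ℕ) : ℝ := (Nat.choose ((Z + 1) * i) i : ℝ) / ((Z : ℝ) * i + 1)

lemma fc_nonneg (Z i : ℕ) : 0 ≤ fc Z i := by
  apply div_nonneg (by positivity)
  positivity

lemma keyterm (Z n i : ℕ) (hi : i ≤ n) (hn : 1 ≤ n) :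
    fc Z i * ((Z * i + 1).choose (n - i) : ℝ)
      = (n.choose i : ℝ) * (((Z + 1) * i).descFactorial (n - 1) : ℝ) / (n.factorial : ℝ) := by
  have ha : (Z + 1) * i = Z * i + i := by ring
  rcases lt_or_ge ((Z + 1) * i + 1) n with hB | hA
  · -- degenerate case: both sides zero
    have h1 : (Z * i + 1).choose (n - i) = 0 := Nat.choose_eq_zero_of_lt (by omega)
    have h2 : ((Z + 1) * i).descFactorial (n - 1) = 0 :=
      Nat.descFactorial_eq_zero_iff_lt.mpr (by omega)
    rw [h1, h2]
    simp
  · -- main case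
    have hin : i ≤ (Z + 1) * i := by nlinarith
    have hni : n - i ≤ Z * i + 1 := by omega
    have hn1 : n - 1 ≤ (Z + 1) * i := by omega
    have e1 : (Z + 1) * i - i = Z * i := by omega
    have e2 : Z * i + 1 - (n - i) = (Z + 1) * i + 1 - n := by omega
    have e3 : (Z + 1) * i - (n - 1) = (Z + 1) * i + 1 - n := by omega
    rw [fc, Nat.cast_choose ℝ hin, Nat.cast_choose ℝ hni, Nat.cast_choose ℝ hi,
      Nat.descFactorial_eq_factorial_mul_choose, e1, e2]
    push_cast [Nat.cast_choose ℝ hn1, e3]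
    have hfac : ((Z * i + 1).factorial : ℝ) = (Z * i + 1) * ((Z * i).factorial : ℝ) := by
      rw [Nat.factorial_succ]; push_cast; ring
    have hnfac : (n.factorial : ℝ) = n * ((n - 1).factorial : ℝ) := by
      obtain ⟨n', rfl⟩ : ∃ n', n = n' + 1 := ⟨n - 1, by omega⟩
      rw [Nat.factorial_succ]; push_cast; ring
    rw [hfac, hnfac]
    have z1 : ((Z * i).factorial : ℝ) ≠ 0 := by positivity
    have z2 : ((n - i).factorial : ℝ) ≠ 0 := by positivity
    have z3 : (((Z + 1) * i + 1 - n).factorial : ℝ) ≠ 0 := by positivity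
    have z4 : ((n - 1).factorial : ℝ) ≠ 0 := by positivity
    have z5 : (i.factorial : ℝ) ≠ 0 := by positivity
    have z6 : ((Z : ℝ) * i + 1) ≠ 0 := by positivity
    have z7 : (n : ℝ) ≠ 0 := by
      have : 0 < n := hn
      positivity
    field_simp

lemma keysum (Z n : ℕ) (hn : 1 ≤ n) :
    ∑ i ∈ range (n + 1), (-1 : ℝ) ^ (n - i) * fc Z i * ((Z * i + 1).choose (n - i) : ℝ) = 0 := by
  set P : Polynomial ℝ := ∏ j ∈ range (n - 1), (Polynomial.C ((Z : ℝ) + 1) * Polynomial.X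
      + Polynomial.C (-(j : ℝ))) with hP
  have hdeg : P.natDegree < n := by
    calc P.natDegree ≤ ∑ j ∈ range (n - 1), (Polynomial.C ((Z : ℝ) + 1) * Polynomial.X
        + Polynomial.C (-(j : ℝ))).natDegree := Polynomial.natDegree_prod_le _ _
    _ ≤ ∑ _j ∈ range (n - 1), 1 := by
          apply Finset.sum_le_sum
          intro j _
          exact Polynomial.natDegree_linear_le
    _ = n - 1 := by simp
    _ < n := by omega
  have hev : ∀ i : ℕ, P.eval (i : ℝ) = (((Z + 1) * i).descFactorial (n - 1) : ℝ) := by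
    intro i
    rw [hP, Polynomial.eval_prod, ← descprod ((Z + 1) * i) (n - 1)]
    apply Finset.prod_congr rfl
    intro j _
    push_cast
    simp only [Polynomial.eval_add, Polynomial.eval_mul, Polynomial.eval_C, Polynomial.eval_X]
    ring
  have hterm : ∀ i ∈ range (n + 1),
      (-1 : ℝ) ^ (n - i) * fc Z i * ((Z * i + 1).choose (n - i) : ℝ)
        = ((-1 : ℝ) ^ n / (n.factorial : ℝ)) * ((-1 : ℝ) ^ i * (n.choose i : ℝ) * P.eval (i : ℝ)) := by
    intro i hi
    have hi' : i ≤ n := by simp at hi; omega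
    have hsign : (-1 : ℝ) ^ (n - i) = (-1 : ℝ) ^ n * (-1 : ℝ) ^ i := by
      have : n = (n - i) + 2 * i - i := by omega
      have h2 : (-1 : ℝ) ^ n * (-1 : ℝ) ^ i = (-1 : ℝ) ^ (n + i) := by rw [pow_add]
      have h3 : n + i = (n - i) + 2 * i := by omega
      rw [h2, h3, pow_add, pow_mul]
      norm_num
    rw [mul_assoc, keyterm Z n i hi' hn, hsign, hev i]
    field_simp
  rw [Finset.sum_congr rfl hterm, ← Finset.mul_sum, altpoly n hn P hdeg, mul_zero]



noncomputable def qm (Z : ℕ) : ℝ := (Z : ℝ) ^ Z / ((Z : ℝ) + 1) ^ (Z + 1)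

lemma qm_pos (Z : ℕ) (hZ : 1 ≤ Z) : 0 < qm Z := by
  have h1 : (0 : ℝ) < (Z : ℝ) := by exact_mod_cast hZ
  apply div_pos (by positivity) (by positivity)

lemma qm_nonneg (Z : ℕ) (hZ : 1 ≤ Z) : 0 ≤ qm Z := (qm_pos Z hZ).le

lemma entropy_nat (Z i : ℕ) :
    Nat.choose ((Z + 1) * i) i * Z ^ (Z * i) ≤ (Z + 1) ^ ((Z + 1) * i) := by
  have ha : (Z + 1) * i = Z * i + i := by ring
  have h0 : (Z + 1) ^ ((Z + 1) * i) = ∑ j ∈ range ((Z + 1) * i + 1),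
      Z ^ j * 1 ^ ((Z + 1) * i - j) * Nat.choose ((Z + 1) * i) j := by
    have := add_pow Z 1 ((Z + 1) * i)
    simpa using this
  rw [h0]
  have hmem : Z * i ∈ range ((Z + 1) * i + 1) := by
    simp only [Finset.mem_range]
    omega
  have hsymm : Nat.choose ((Z + 1) * i) (Z * i) = Nat.choose ((Z + 1) * i) i := by
    have h2 : Z * i = (Z + 1) * i - i := by omega
    rw [h2, Nat.choose_symm (by omega)]
  calc Nat.choose ((Z + 1) * i) i * Z ^ (Z * i)
      = Z ^ (Z * i) * 1 ^ ((Z + 1) * i - Z * i) * Nat.choose ((Z + 1) * i) (Z * i) := by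
        rw [hsymm]; ring
    _ ≤ _ := Finset.single_le_sum (f := fun j => Z ^ j * 1 ^ ((Z + 1) * i - j) *
          Nat.choose ((Z + 1) * i) j) (fun j _ => by positivity) hmem

lemma fc_mul_qm_pow_le_one (Z i : ℕ) (hZ : 1 ≤ Z) : fc Z i * qm Z ^ i ≤ 1 := by
  have hZR : (0 : ℝ) < (Z : ℝ) := by exact_mod_cast hZ
  have h1 : fc Z i ≤ (Nat.choose ((Z + 1) * i) i : ℝ) := by
    rw [fc]
    apply div_le_self (by positivity)
    have : (0:ℝ) ≤ (Z : ℝ) * i := by positivity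
    linarith
  have hq : qm Z ^ i = (Z : ℝ) ^ (Z * i) / ((Z : ℝ) + 1) ^ ((Z + 1) * i) := by
    rw [qm, div_pow, ← pow_mul, ← pow_mul]
  have h2 : (Nat.choose ((Z + 1) * i) i : ℝ) * (Z : ℝ) ^ (Z * i)
      ≤ ((Z : ℝ) + 1) ^ ((Z + 1) * i) := by
    have := entropy_nat Z i
    exact_mod_cast this
  have hden : (0:ℝ) < ((Z : ℝ) + 1) ^ ((Z + 1) * i) := by positivity
  have h3 : fc Z i * qm Z ^ i ≤ (Nat.choose ((Z + 1) * i) i : ℝ) * qm Z ^ i := by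
    apply mul_le_mul_of_nonneg_right h1
    rw [hq]; positivity
  calc fc Z i * qm Z ^ i ≤ (Nat.choose ((Z + 1) * i) i : ℝ) * qm Z ^ i := h3
    _ = (Nat.choose ((Z + 1) * i) i : ℝ) * (Z : ℝ) ^ (Z * i) / ((Z : ℝ) + 1) ^ ((Z + 1) * i) := by
        rw [hq]; ring
    _ ≤ 1 := by rw [div_le_one hden]; linarith

lemma fc_le_inv_qm (Z i : ℕ) (hZ : 1 ≤ Z) {y : ℝ} (hy : 0 ≤ y) (hyq : y < qm Z) :
    fc Z i * y ^ i ≤ (y / qm Z) ^ i := by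
  have hqpos := qm_pos Z hZ
  have : fc Z i * y ^ i = (fc Z i * qm Z ^ i) * (y / qm Z) ^ i := by
    have hq : qm Z ^ i ≠ 0 := pow_ne_zero i hqpos.ne'
    rw [div_pow]
    field_simp
  rw [this]
  exact mul_le_of_le_one_left (by positivity) (fc_mul_qm_pow_le_one Z i hZ)

lemma summable_fc (Z : ℕ) (hZ : 1 ≤ Z) {y : ℝ} (hy : |y| < qm Z) :
    Summable (fun i => fc Z i * y ^ i) := by
  have hqpos := qm_pos Z hZ
  apply Summable.of_norm_bounded (g := fun i => (|y| / qm Z) ^ i)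
  · exact summable_geometric_of_lt_one (by positivity) (by rwa [div_lt_one hqpos])
  · intro i
    rw [Real.norm_eq_abs, abs_mul, abs_pow, abs_of_nonneg (fc_nonneg Z i), ← abs_pow]
    simpa using fc_le_inv_qm Z i hZ (abs_nonneg y) hy

noncomputable def gF (Z : ℕ) : ℝ → ℝ := fun x => ∑' i, fc Z i * x ^ i

lemma gF_analyt (Z : ℕ) (hZ : 1 ≤ Z) : AnalyticOnNhd ℝ (gF Z) {x : ℝ | |x| < qm Z} := by
  have hqpos := qm_pos Z hZ
  set p := FormalMultilinearSeries.ofScalars ℝ (fc Z) with hp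
  have hrad : ((qm Z).toNNReal : ENNReal) ≤ p.radius := by
    apply p.le_radius_of_bound 1
    intro n
    rw [hp, FormalMultilinearSeries.ofScalars_norm, Real.norm_eq_abs,
      abs_of_nonneg (fc_nonneg Z n), Real.coe_toNNReal _ (qm_nonneg Z hZ)]
    exact fc_mul_qm_pow_le_one Z n hZ
  have hrpos : 0 < p.radius := lt_of_lt_of_le (by
    simp only [ENNReal.coe_pos, Real.toNNReal_pos]; exact hqpos) hrad
  have hball := (p.hasFPowerSeriesOnBall hrpos).analyticOnNhd
  have hsum : p.sum = gF Z := by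
    funext x
    rw [hp]
    show FormalMultilinearSeries.ofScalarsSum (fc Z) x = gF Z x
    rw [FormalMultilinearSeries.ofScalars_sum_eq]
    simp [gF, smul_eq_mul]
  rw [hsum] at hball
  apply hball.mono
  intro x hx
  simp only [Set.mem_setOf_eq] at hx
  rw [EMetric.mem_ball, edist_zero_right]
  calc (‖x‖₊ : ENNReal) < ((qm Z).toNNReal : ENNReal) := by
        rw [ENNReal.coe_lt_coe, ← norm_toNNReal]
        rw [Real.toNNReal_lt_toNNReal_iff hqpos]
        simpa [Real.norm_eq_abs] using hx
    _ ≤ p.radius := hrad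
section Part3
variable (Z : ℕ)

lemma rowsum (s u : ℝ) (i : ℕ) :
    ∑' j : ℕ, s * ((Z * i + 1).choose j : ℝ) * u ^ j = s * (1 + u) ^ (Z * i + 1) := by
  have hvan : ∀ j ∉ range (Z * i + 2), s * ((Z * i + 1).choose j : ℝ) * u ^ j = 0 := by
    intro j hj
    simp only [Finset.mem_range] at hj
    rw [Nat.choose_eq_zero_of_lt (by omega)]
    simp
  rw [tsum_eq_sum hvan]
  have expand : (u + 1) ^ (Z * i + 1)
      = ∑ j ∈ range (Z * i + 2), u ^ j * 1 ^ (Z * i + 1 - j) * ((Z * i + 1).choose j : ℝ) :=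
    add_pow u 1 (Z * i + 1)
  have : ∑ j ∈ range (Z * i + 2), s * ((Z * i + 1).choose j : ℝ) * u ^ j
      = s * ∑ j ∈ range (Z * i + 2), u ^ j * 1 ^ (Z * i + 1 - j) * ((Z * i + 1).choose j : ℝ) := by
    rw [Finset.mul_sum]
    apply Finset.sum_congr rfl
    intro j _
    ring
  rw [this, ← expand, add_comm u 1]

lemma rowsummable (s u : ℝ) (i : ℕ) :
    Summable (fun j : ℕ => s * ((Z * i + 1).choose j : ℝ) * u ^ j) := by
  apply summable_of_ne_finset_zero (s := range (Z * i + 2))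
  intro j hj
  simp only [Finset.mem_range] at hj
  rw [Nat.choose_eq_zero_of_lt (by omega)]
  simp

lemma Fsummable (hZ : 1 ≤ Z) {t : ℝ} (h1 : |t| < 1) (h2 : 2 ^ Z * |t| < qm Z) :
    Summable (fun p : ℕ × ℕ => (fc Z p.1 * t ^ p.1) * ((Z * p.1 + 1).choose p.2 : ℝ) * (-t) ^ p.2) := by
  apply Summable.of_abs
  have habs : (fun p : ℕ × ℕ => |(fc Z p.1 * t ^ p.1) * ((Z * p.1 + 1).choose p.2 : ℝ) * (-t) ^ p.2|)
      = fun p : ℕ × ℕ => (fc Z p.1 * |t| ^ p.1) * ((Z * p.1 + 1).choose p.2 : ℝ) * |t| ^ p.2 := by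
    funext p
    rw [abs_mul, abs_mul, abs_mul, abs_pow, abs_pow, abs_neg,
      abs_of_nonneg (fc_nonneg Z p.1), Nat.abs_cast]
  rw [habs]
  rw [summable_prod_of_nonneg (by
    intro p
    have h1 := fc_nonneg Z p.1
    have h2 : (0:ℝ) ≤ |t| ^ p.1 := by positivity
    have h3 : (0:ℝ) ≤ ((Z * p.1 + 1).choose p.2 : ℝ) := by positivity
    have h4 : (0:ℝ) ≤ |t| ^ p.2 := by positivity
    positivity)]
  constructor
  · intro i
    exact rowsummable Z (fc Z i * |t| ^ i) |t| i
  · have hrs : (fun i => ∑' j : ℕ, (fc Z i * |t| ^ i) * ((Z * i + 1).choose j : ℝ) * |t| ^ j)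
        = fun i => (1 + |t|) * (fc Z i * (|t| * (1 + |t|) ^ Z) ^ i) := by
      funext i
      rw [rowsum Z (fc Z i * |t| ^ i) |t| i]
      rw [pow_succ, pow_mul, mul_pow]
      ring
    rw [hrs]
    apply Summable.mul_left
    apply summable_fc Z hZ
    have hy : 0 ≤ |t| * (1 + |t|) ^ Z := by positivity
    rw [abs_of_nonneg hy]
    calc |t| * (1 + |t|) ^ Z ≤ |t| * 2 ^ Z := by
          apply mul_le_mul_of_nonneg_left _ (abs_nonneg t)
          apply pow_le_pow_left₀ (by positivity)
          linarith
      _ < qm Z := by linarith [h2]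

lemma smallEq (hZ : 1 ≤ Z) {t : ℝ} (h1 : |t| < 1) (h2 : 2 ^ Z * |t| < qm Z) :
    (1 - t) * gF Z (t * (1 - t) ^ Z) = 1 := by
  set F : ℕ × ℕ → ℝ :=
    fun p => (fc Z p.1 * t ^ p.1) * ((Z * p.1 + 1).choose p.2 : ℝ) * (-t) ^ p.2 with hFdef
  have hF : Summable F := Fsummable Z hZ h1 h2
  -- first evaluation: sum over rows
  have eq1 : ∑' p : ℕ × ℕ, F p = (1 - t) * gF Z (t * (1 - t) ^ Z) := by
    rw [Summable.tsum_prod' hF (fun i => rowsummable Z (fc Z i * t ^ i) (-t) i)]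
    have hinner : ∀ i : ℕ, ∑' j : ℕ, F (i, j) = (1 - t) * (fc Z i * (t * (1 - t) ^ Z) ^ i) := by
      intro i
      have hr := rowsum Z (fc Z i * t ^ i) (-t) i
      simp only [hFdef]
      rw [hr]
      have hh : (1 : ℝ) + -t = 1 - t := by ring
      rw [hh, pow_succ, pow_mul, mul_pow]
      ring
    rw [tsum_congr hinner, tsum_mul_left, gF]
  -- second evaluation: group by antidiagonals
  have eq2 : ∑' p : ℕ × ℕ, F p = 1 := by
    rw [← (Finset.HasAntidiagonal.sigmaAntidiagonalEquivProd (A := ℕ)).tsum_eq F]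
    have hFs : Summable (fun x : (Σ n : ℕ, {p // p ∈ Finset.HasAntidiagonal.antidiagonal n}) => F x.2) :=
      (Equiv.summable_iff (Finset.HasAntidiagonal.sigmaAntidiagonalEquivProd (A := ℕ))).2 hF
    have hsig : ∑' x : (Σ n : ℕ, {p // p ∈ Finset.HasAntidiagonal.antidiagonal n}),
        F (Finset.HasAntidiagonal.sigmaAntidiagonalEquivProd x)
        = ∑' (n : ℕ) (c : {p // p ∈ Finset.HasAntidiagonal.antidiagonal n}), F (c : ℕ × ℕ) :=
      Summable.tsum_sigma' (fun n => Summable.of_finite) hFs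
    rw [hsig]
    have hinner : ∀ n : ℕ, (∑' c : {p // p ∈ Finset.HasAntidiagonal.antidiagonal n}, F (c : ℕ × ℕ))
        = if n = 0 then 1 else 0 := by
      intro n
      rw [Finset.tsum_subtype]
      rw [Finset.Nat.sum_antidiagonal_eq_sum_range_succ_mk]
      rcases Nat.eq_zero_or_pos n with rfl | hn
      · simp [hFdef, fc]
      · rw [if_neg (by omega)]
        have hterm : ∀ k ∈ range (n + 1), F (k, n - k)
            = ((-1 : ℝ) ^ (n - k) * fc Z k * ((Z * k + 1).choose (n - k) : ℝ)) * t ^ n := by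
          intro k hk
          simp only [Finset.mem_range] at hk
          simp only [hFdef]
          rw [neg_pow]
          have hpow : t ^ k * (t ^ (n - k)) = t ^ n := by
            rw [← pow_add]
            congr 1
            omega
          linear_combination ((-1 : ℝ) ^ (n - k) * fc Z k * ((Z * k + 1).choose (n - k) : ℝ)) * hpow
        rw [Finset.sum_congr rfl hterm, ← Finset.sum_mul, keysum Z n hn, zero_mul]
    rw [tsum_congr hinner]
    rw [tsum_eq_single 0 (by intro n hn; rw [if_neg hn])]
    simp
  rw [← eq1, eq2]

end Part3
section Part4
variable (Z : ℕ)

lemma gF_zero : gF Z 0 = 1 := by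
  rw [gF, tsum_eq_single 0 (by intro i hi; rw [zero_pow hi, mul_zero])]
  simp [fc]

lemma eqNear (hZ : 1 ≤ Z) :
    gF Z =ᶠ[nhds 0] fun x => 1 + x * (gF Z x) ^ (Z + 1) := by
  have hqpos := qm_pos Z hZ
  set δ : ℝ := min (1/2) (qm Z / (2 * 2 ^ Z)) with hδdef
  have hδpos : 0 < δ := by
    apply lt_min (by norm_num)
    positivity
  have hδlt1 : δ < 1 := lt_of_le_of_lt (min_le_left _ _) (by norm_num)
  have hδq : 2 ^ Z * δ < qm Z := by
    have h1 : δ ≤ qm Z / (2 * 2 ^ Z) := min_le_right _ _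
    have h2 : (0:ℝ) < 2 ^ Z := by positivity
    calc 2 ^ Z * δ ≤ 2 ^ Z * (qm Z / (2 * 2 ^ Z)) := by
          apply mul_le_mul_of_nonneg_left h1 (by positivity)
      _ = qm Z / 2 := by field_simp
      _ < qm Z := by linarith
  set φ : ℝ → ℝ := fun t => t * (1 - t) ^ Z with hφdef
  have hφcont : Continuous φ := by fun_prop
  have hφδpos : 0 < φ δ := by
    apply mul_pos hδpos
    apply pow_pos
    linarith
  have hφnegδ : φ (-δ) < 0 := by
    have : (0:ℝ) < (1 - -δ) ^ Z := by apply pow_pos; linarith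
    have := mul_pos hδpos this
    simp only [hφdef]
    nlinarith
  set ε' : ℝ := min (φ δ) (-φ (-δ)) with hε'def
  have hε'pos : 0 < ε' := lt_min hφδpos (by linarith)
  filter_upwards [Metric.ball_mem_nhds (0:ℝ) hε'pos] with x hx
  rw [Metric.mem_ball, Real.dist_eq, sub_zero] at hx
  have hxmem : x ∈ Set.Icc (φ (-δ)) (φ δ) := by
    constructor
    · have : -ε' ≤ x := by cases abs_lt.mp hx; linarith
      have h2 : φ (-δ) ≤ -ε' := by
        have : ε' ≤ -φ (-δ) := min_le_right _ _
        linarith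
      linarith
    · have : x ≤ ε' := by cases abs_lt.mp hx; linarith
      exact le_trans this (min_le_left _ _)
  obtain ⟨t, htmem, htx⟩ := intermediate_value_Icc (by linarith : -δ ≤ δ)
    (hφcont.continuousOn) hxmem
  have htabs : |t| ≤ δ := abs_le.mpr ⟨htmem.1, htmem.2⟩
  have h1t : (1:ℝ) - t ≠ 0 := by
    have : |t| < 1 := lt_of_le_of_lt htabs hδlt1
    cases abs_lt.mp this
    intro h
    linarith
  have hse := smallEq Z hZ (lt_of_le_of_lt htabs hδlt1)
    (by
      have : 2 ^ Z * |t| ≤ 2 ^ Z * δ := by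
        apply mul_le_mul_of_nonneg_left htabs (by positivity)
      linarith)
  have hse' : (1 - t) * gF Z x = 1 := by rw [← htx]; exact hse
  have hg : gF Z x = 1 / (1 - t) := by
    field_simp
    linarith [hse']
  rw [hg, ← htx]
  show (1:ℝ) / (1 - t) = 1 + (t * (1 - t) ^ Z) * ((1:ℝ) / (1 - t)) ^ (Z + 1)
  rw [div_pow, one_pow]
  rw [pow_succ]
  field_simp
  ring

lemma eqBall (hZ : 1 ≤ Z) : ∀ x : ℝ, |x| < qm Z →
    gF Z x = 1 + x * (gF Z x) ^ (Z + 1) := by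
  have hqpos := qm_pos Z hZ
  have hU : {x : ℝ | |x| < qm Z} = Metric.ball (0:ℝ) (qm Z) := by
    ext x
    simp [Metric.mem_ball, Real.dist_eq]
  have hf : AnalyticOnNhd ℝ (gF Z) {x : ℝ | |x| < qm Z} := gF_analyt Z hZ
  have hg : AnalyticOnNhd ℝ (fun x => 1 + x * (gF Z x) ^ (Z + 1)) {x : ℝ | |x| < qm Z} := by
    apply (analyticOnNhd_const (v := (1:ℝ))).add
    apply (analyticOnNhd_id).mul
    exact hf.pow (Z + 1)
  have hpre : IsPreconnected {x : ℝ | |x| < qm Z} := by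
    rw [hU]
    exact (convex_ball (0:ℝ) (qm Z)).isPreconnected
  have h0 : (0:ℝ) ∈ {x : ℝ | |x| < qm Z} := by
    simp only [Set.mem_setOf_eq, abs_zero]
    exact hqpos
  have := hf.eqOn_of_preconnected_of_eventuallyEq hg hpre h0 (eqNear Z hZ)
  intro x hx
  exact this hx

lemma gBound (hZ : 1 ≤ Z) : ∀ x : ℝ, 0 ≤ x → x < qm Z →
    gF Z x ≤ ((Z:ℝ) + 1) / Z := by
  have hqpos := qm_pos Z hZ
  have hZpos : (0:ℝ) < (Z:ℝ) := by exact_mod_cast hZ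
  set L : ℝ := ((Z:ℝ) + 1) / Z with hLdef
  have hL1 : 1 < L := by
    rw [hLdef, lt_div_iff₀ hZpos]
    linarith
  intro x0 hx0 hx0q
  by_contra hcon
  push_neg at hcon
  -- gF is continuous on [0, x0]
  have hcont : ContinuousOn (gF Z) (Set.Icc 0 x0) := by
    intro y hy
    have : |y| < qm Z := by
      rw [abs_of_nonneg hy.1]
      exact lt_of_le_of_lt hy.2 hx0q
    exact ((gF_analyt Z hZ) y this).continuousAt.continuousWithinAt
  have hmem : L ∈ Set.Icc (gF Z 0) (gF Z x0) := by
    rw [gF_zero]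
    exact ⟨hL1.le, hcon.le⟩
  obtain ⟨x1, hx1mem, hx1⟩ := intermediate_value_Icc hx0 hcont hmem
  have hx1q : |x1| < qm Z := by
    rw [abs_of_nonneg hx1mem.1]
    exact lt_of_le_of_lt hx1mem.2 hx0q
  have heq := eqBall Z hZ x1 hx1q
  rw [hx1] at heq
  -- derive x1 = qm Z
  have hLpos : 0 < L := by linarith
  have hLpow : (0:ℝ) < L ^ (Z + 1) := by positivity
  have hkey : qm Z * L ^ (Z + 1) = L - 1 := by
    rw [hLdef, qm, div_pow]
    have h1 : ((Z:ℝ) + 1) ^ (Z+1) ≠ 0 := by positivity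
    have h2 : (Z:ℝ) ^ (Z+1) ≠ 0 := by positivity
    have e2 : L - 1 = 1 / (Z:ℝ) := by rw [hLdef]; field_simp; ring
    rw [e2, pow_succ ((Z:ℝ)) Z]
    have h3 : (Z:ℝ) ≠ 0 := by positivity
    field_simp
  have hkey2 : x1 * L ^ (Z + 1) = L - 1 := by linarith [heq]
  have : x1 = qm Z := by
    have := hkey2.trans hkey.symm
    exact mul_right_cancel₀ (ne_of_gt hLpow) this
  have : x1 < qm Z := lt_of_le_of_lt hx1mem.2 hx0q
  linarith

end Part4
section Part5
variable (Z : ℕ)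

lemma summable_at_qm (hZ : 1 ≤ Z) : Summable (fun i => fc Z i * qm Z ^ i) := by
  have hqpos := qm_pos Z hZ
  have hZpos : (0:ℝ) < (Z:ℝ) := by exact_mod_cast hZ
  set L : ℝ := ((Z:ℝ) + 1) / Z with hLdef
  apply summable_of_sum_range_le (c := L)
    (fun i => mul_nonneg (fc_nonneg Z i) (pow_nonneg hqpos.le i))
  intro N
  set S : ℝ → ℝ := fun x => ∑ i ∈ range N, fc Z i * x ^ i with hSdef
  have hScont : Continuous S := by
    apply continuous_finset_sum
    intro i _
    fun_prop
  have hclosed : IsClosed {x : ℝ | S x ≤ L} := isClosed_le hScont continuous_const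
  have hsub : Set.Ico (0:ℝ) (qm Z) ⊆ {x : ℝ | S x ≤ L} := by
    intro x hx
    have hxq : |x| < qm Z := by rw [abs_of_nonneg hx.1]; exact hx.2
    have h1 : S x ≤ gF Z x := by
      apply Summable.sum_le_tsum (range N)
        (fun i _ => mul_nonneg (fc_nonneg Z i) (pow_nonneg hx.1 i))
      exact summable_fc Z hZ hxq
    exact le_trans h1 (gBound Z hZ x hx.1 hx.2)
  have hcl : qm Z ∈ closure (Set.Ico (0:ℝ) (qm Z)) := by
    rw [closure_Ico (ne_of_lt hqpos)]
    exact ⟨hqpos.le, le_refl _⟩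
  exact hclosed.closure_subset_iff.mpr hsub hcl

lemma eqAtQ (hZ : 1 ≤ Z) : gF Z (qm Z) = 1 + qm Z * (gF Z (qm Z)) ^ (Z + 1) := by
  have hqpos := qm_pos Z hZ
  set q : ℝ := qm Z with hq
  set cl : ℝ → ℝ := fun y => max 0 (min y q) with hcl
  have hclc : Continuous cl := by fun_prop
  have hclmem : ∀ y : ℝ, 0 ≤ cl y ∧ cl y ≤ q := by
    intro y
    exact ⟨le_max_left 0 _, max_le hqpos.le (min_le_right _ _)⟩
  have hcleq : ∀ y : ℝ, 0 ≤ y → y ≤ q → cl y = y := by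
    intro y h1 h2
    rw [hcl]
    simp only
    rw [min_eq_left h2, max_eq_right h1]
  set G : ℝ → ℝ := fun y => ∑' i, fc Z i * (cl y) ^ i with hG
  have hGcont : Continuous G := by
    apply continuous_tsum (u := fun i => fc Z i * q ^ i)
    · intro i
      fun_prop
    · exact summable_at_qm Z hZ
    · intro i y
      rw [Real.norm_eq_abs, abs_mul, abs_of_nonneg (fc_nonneg Z i), abs_pow,
        abs_of_nonneg (hclmem y).1]
      apply mul_le_mul_of_nonneg_left _ (fc_nonneg Z i)
      exact pow_le_pow_left₀ (hclmem y).1 (hclmem y).2 i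
  have hGeq : ∀ y : ℝ, 0 ≤ y → y ≤ q → G y = gF Z y := by
    intro y h1 h2
    rw [hG]
    simp only
    rw [hcleq y h1 h2]
    rfl
  set Φ : ℝ → ℝ := fun y => G y - (1 + y * (G y) ^ (Z + 1)) with hΦ
  have hΦcont : Continuous Φ := by fun_prop
  have hclosed : IsClosed {y : ℝ | Φ y = 0} := isClosed_eq hΦcont continuous_const
  have hsub : Set.Ico (0:ℝ) q ⊆ {y : ℝ | Φ y = 0} := by
    intro y hy
    have h1 := eqBall Z hZ y (by rw [abs_of_nonneg hy.1]; exact hy.2)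
    simp only [Set.mem_setOf_eq, hΦ]
    rw [hGeq y hy.1 hy.2.le]
    linarith [h1]
  have hxcl : q ∈ closure (Set.Ico (0:ℝ) q) := by
    rw [closure_Ico (ne_of_lt hqpos)]
    exact ⟨hqpos.le, le_refl _⟩
  have hΦx : Φ q = 0 := hclosed.closure_subset_iff.mpr hsub hxcl
  rw [hΦ] at hΦx
  simp only at hΦx
  rw [hGeq q hqpos.le le_rfl] at hΦx
  linarith [hΦx]

lemma eqIcc (hZ : 1 ≤ Z) : ∀ x : ℝ, 0 ≤ x → x ≤ qm Z →
    gF Z x = 1 + x * (gF Z x) ^ (Z + 1) := by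
  intro x hx0 hxq
  rcases lt_or_eq_of_le hxq with hlt | heq
  · exact eqBall Z hZ x (by rw [abs_of_nonneg hx0]; exact hlt)
  · rw [heq]; exact eqAtQ Z hZ

end Part5
theorem stmt_10 (Z : ℕ) (hZ : 1 ≤ Z) (r ε u0 θ U : ℝ)
    (hr0 : 0 ≤ r) (hr1 : r < 1) (hε : 0 ≤ ε) (hu0 : 0 ≤ u0)
    (hθdef : θ = r * ε * u0 ^ Z / (1 - r) ^ (Z + 1))
    (hθ : θ ≤ (Z : ℝ) ^ Z / ((Z : ℝ) + 1) ^ (Z + 1))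
    (hU : U = (u0 / (1 - r)) *
      ∑' i : ℕ, ((Nat.choose ((Z + 1) * i) i : ℝ) / ((Z : ℝ) * i + 1)) * θ ^ i) :
    U = u0 + r * (1 + ε * U ^ Z) * U := by
  have hs : (0:ℝ) < 1 - r := by linarith
  set B : ℝ := ∑' i : ℕ, ((Nat.choose ((Z + 1) * i) i : ℝ) / ((Z : ℝ) * i + 1)) * θ ^ i with hBdef
  have hgB : gF Z θ = B := by
    rw [gF, hBdef]
    apply tsum_congr
    intro i
    rw [fc]
  have hθ0 : 0 ≤ θ := by
    rw [hθdef]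
    exact div_nonneg (mul_nonneg (mul_nonneg hr0 hε) (pow_nonneg hu0 Z))
      (pow_nonneg hs.le (Z+1))
  have hθq : θ ≤ qm Z := by rw [qm]; exact hθ
  have hB : B = 1 + θ * B ^ (Z + 1) := by
    have := eqIcc Z hZ θ hθ0 hθq
    rwa [hgB] at this
  have k1 : (1 - r) * (u0 / (1 - r)) = u0 := by field_simp
  have k2 : r * ε * (u0 / (1 - r)) ^ (Z + 1) = θ * (1 - r) * (u0 / (1 - r)) := by
    rw [hθdef]
    have hs' : (1 - r) ^ (Z+1) ≠ 0 := pow_ne_zero _ hs.ne'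
    rw [div_pow]
    field_simp
    ring
  rw [hU]
  linear_combination ((1 - r) * (u0 / (1 - r))) * hB - (B ^ (Z + 1)) * k2 + k1
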